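/- Suppose h and h̃ are two mixing densities that are both strictly positive in a neighborhood of zero, and suppose lim_{u→0+} h(u)/h̃(u) exists and lies in (0,∞). Then λ_h = λ_{h̃} (as elements of [0,∞]). -/

import Mathlib

open MeasureTheory Set
open scoped ENNReal

/-- A mixing density: a Borel measurable function on `(0,∞)` (extended to all of `ℝ`),
nonnegative on `(0,∞)`, integrating to 1 over `(0,∞)`. -/
def IsMixingDensity (h : ℝ → ℝ) : Prop :=
  Measurable h ∧ (∀ u ∈ Ioi (0:ℝ), 0 ≤ h u) ∧
    ∫⁻ u in Ioi (0:ℝ), ENNReal.ofReal (h u) = 1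

/-- `∫_0^∞ u^{-1/2} e^{-su/2} h(u) du`, as an element of `[0,∞]`. -/
noncomputable def mixNum (h : ℝ → ℝ) (s : ℝ) : ℝ≥0∞ :=
  ∫⁻ u in Ioi (0:ℝ), ENNReal.ofReal (u ^ (-(1:ℝ) / 2) * Real.exp (-(s * u) / 2) * h u)

/-- `∫_0^∞ u^{1/2} e^{-su/2} h(u) du`, as an element of `[0,∞]`. -/
noncomputable def mixDen (h : ℝ → ℝ) (s : ℝ) : ℝ≥0∞ :=
  ∫⁻ u in Ioi (0:ℝ), ENNReal.ofReal (u ^ ((1:ℝ) / 2) * Real.exp (-(s * u) / 2) * h u)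

/-- `h ∈ A(λ)`: there is a constant `k` with
`(∫_0^∞ u^{-1/2} e^{-su/2} h du)/(∫_0^∞ u^{1/2} e^{-su/2} h du) ≤ λ s + k` for all `s ≥ 0`. -/
def MemA (h : ℝ → ℝ) (l : ℝ) : Prop :=
  0 ≤ l ∧ ∃ k : ℝ, ∀ s : ℝ, 0 ≤ s → mixNum h s / mixDen h s ≤ ENNReal.ofReal (l * s + k)

/-- `λ_h ∈ [0,∞]`: the infimum of `{λ ∈ [0,∞) : h ∈ A(λ)}` (equal to `∞` if this set is empty). -/
noncomputable def lambdaH (h : ℝ → ℝ) : ℝ≥0∞ :=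
  sInf (ENNReal.ofReal '' {l : ℝ | MemA h l})

open MeasureTheory Set
open scoped ENNReal

namespace LambdaHAux

open Filter Real

noncomputable def W (p : ℝ) (g : ℝ → ℝ) (s : ℝ) (S : Set ℝ) : ℝ≥0∞ :=
  ∫⁻ u in S, ENNReal.ofReal (u ^ p * Real.exp (-(s * u) / 2) * g u)

lemma W_split (p : ℝ) (g : ℝ → ℝ) (s ε : ℝ) (hε : 0 < ε) :
    W p g s (Ioi 0) = W p g s (Ioo 0 ε) + W p g s (Ici ε) := by
  rw [W, W, W, ← Ioo_union_Ici_eq_Ioi hε]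
  exact lintegral_union measurableSet_Ici
    (Set.disjoint_left.mpr fun u h1 h2 => (not_le.mpr h1.2) h2)

lemma W_le_mul {p s c : ℝ} {f g : ℝ → ℝ} (hg : Measurable g) (hc : 0 ≤ c) {S : Set ℝ}
    (hS : S ⊆ Ioi 0) (hcomp : ∀ u ∈ S, f u ≤ c * g u) :
    W p f s S ≤ ENNReal.ofReal c * W p g s S := by
  rw [W, W, ← lintegral_const_mul' _ _ ENNReal.ofReal_ne_top]
  refine setLIntegral_mono (by fun_prop) fun u hu => ?_
  have hu0 : (0:ℝ) < u := hS hu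
  have he : 0 ≤ u ^ p * Real.exp (-(s * u) / 2) := by positivity
  rw [← ENNReal.ofReal_mul hc]
  refine ENNReal.ofReal_le_ofReal ?_
  calc u ^ p * Real.exp (-(s * u) / 2) * f u
      ≤ u ^ p * Real.exp (-(s * u) / 2) * (c * g u) :=
        mul_le_mul_of_nonneg_left (hcomp u hu) he
    _ = c * (u ^ p * Real.exp (-(s * u) / 2) * g u) := by ring

lemma mul_le_W {p s c : ℝ} {f g : ℝ → ℝ} (hf : Measurable f) (hc : 0 ≤ c) {S : Set ℝ}
    (hS : S ⊆ Ioi 0) (hcomp : ∀ u ∈ S, c * g u ≤ f u) :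
    ENNReal.ofReal c * W p g s S ≤ W p f s S := by
  rw [W, W, ← lintegral_const_mul' _ _ ENNReal.ofReal_ne_top]
  refine setLIntegral_mono (by fun_prop) fun u hu => ?_
  have hu0 : (0:ℝ) < u := hS hu
  have he : 0 ≤ u ^ p * Real.exp (-(s * u) / 2) := by positivity
  rw [← ENNReal.ofReal_mul hc]
  refine ENNReal.ofReal_le_ofReal ?_
  calc c * (u ^ p * Real.exp (-(s * u) / 2) * g u)
      = u ^ p * Real.exp (-(s * u) / 2) * (c * g u) := by ring
    _ ≤ u ^ p * Real.exp (-(s * u) / 2) * f u :=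
        mul_le_mul_of_nonneg_left (hcomp u hu) he

lemma W_le_const {p s C : ℝ} {g : ℝ → ℝ} (hg : Measurable g) {S : Set ℝ} (hC : 0 ≤ C)
    (hgnn : ∀ u ∈ S, 0 ≤ g u)
    (hb : ∀ u ∈ S, u ^ p * Real.exp (-(s * u) / 2) ≤ C)
    (hone : ∫⁻ u in S, ENNReal.ofReal (g u) ≤ 1) :
    W p g s S ≤ ENNReal.ofReal C := by
  calc W p g s S ≤ ∫⁻ u in S, ENNReal.ofReal C * ENNReal.ofReal (g u) := by
        refine setLIntegral_mono (by fun_prop) fun u hu => ?_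
        rw [← ENNReal.ofReal_mul hC]
        exact ENNReal.ofReal_le_ofReal
          (mul_le_mul_of_nonneg_right (hb u hu) (hgnn u hu))
    _ = ENNReal.ofReal C * ∫⁻ u in S, ENNReal.ofReal (g u) :=
        lintegral_const_mul' _ _ ENNReal.ofReal_ne_top
    _ ≤ ENNReal.ofReal C * 1 := mul_le_mul_right hone _
    _ = ENNReal.ofReal C := mul_one _

lemma exp_mul_le_W {p s ε : ℝ} (hs : 0 ≤ s) (hε : 0 < ε) {g : ℝ → ℝ} (hg : Measurable g)
    (hgnn : ∀ u ∈ Ioi (0:ℝ), 0 ≤ g u) :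
    ENNReal.ofReal (Real.exp (-(s * ε) / 8)) * W p g 0 (Ioo 0 (ε/4)) ≤ W p g s (Ioo 0 ε) := by
  have hsub : Ioo (0:ℝ) (ε/4) ⊆ Ioo 0 ε := Ioo_subset_Ioo_right (by linarith)
  refine le_trans ?_ ((lintegral_mono_set hsub : W p g s (Ioo 0 (ε/4)) ≤ W p g s (Ioo 0 ε)))
  unfold W
  rw [← lintegral_const_mul' _ _ ENNReal.ofReal_ne_top]
  refine setLIntegral_mono (by fun_prop) fun u hu => ?_
  have hu0 : (0:ℝ) < u := hu.1
  have hgn : 0 ≤ g u := hgnn u hu0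
  have hup : (0:ℝ) ≤ u ^ p := (Real.rpow_pos_of_pos hu0 p).le
  rw [← ENNReal.ofReal_mul (Real.exp_nonneg _)]
  refine ENNReal.ofReal_le_ofReal ?_
  have h1 : Real.exp (-(s * ε) / 8) ≤ Real.exp (-(s * u) / 2) := by
    refine Real.exp_le_exp.2 ?_
    have h4 : 4 * u ≤ ε := by linarith [hu.2]
    nlinarith [mul_le_mul_of_nonneg_left h4 hs]
  calc Real.exp (-(s * ε) / 8) * (u ^ p * Real.exp (-(0 * u) / 2) * g u)
      = (u ^ p * g u) * Real.exp (-(s * ε) / 8) := by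
        simp [Real.exp_zero]; ring
    _ ≤ (u ^ p * g u) * Real.exp (-(s * u) / 2) :=
        mul_le_mul_of_nonneg_left h1 (mul_nonneg hup hgn)
    _ = u ^ p * Real.exp (-(s * u) / 2) * g u := by ring

lemma W_mono_s {p s : ℝ} (hs : 0 ≤ s) {g : ℝ → ℝ} (hg : Measurable g)
    (hgnn : ∀ u ∈ Ioi (0:ℝ), 0 ≤ g u) {S : Set ℝ} (hS : S ⊆ Ioi 0) :
    W p g s S ≤ W p g 0 S := by
  refine setLIntegral_mono (by fun_prop) fun u hu => ?_
  have hu0 : (0:ℝ) < u := hS hu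
  refine ENNReal.ofReal_le_ofReal ?_
  have h1 : Real.exp (-(s * u) / 2) ≤ Real.exp (-(0 * u) / 2) := by
    refine Real.exp_le_exp.2 ?_
    nlinarith [mul_nonneg hs hu0.le]
  have hup : (0:ℝ) ≤ u ^ p := (Real.rpow_pos_of_pos hu0 p).le
  calc u ^ p * Real.exp (-(s * u) / 2) * g u
      = (u ^ p * g u) * Real.exp (-(s * u) / 2) := by ring
    _ ≤ (u ^ p * g u) * Real.exp (-(0 * u) / 2) :=
        mul_le_mul_of_nonneg_left h1 (mul_nonneg hup (hgnn u hu0))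
    _ = u ^ p * Real.exp (-(0 * u) / 2) * g u := by ring

lemma rpow_half_le_exp {x : ℝ} (hx : 0 ≤ x) : x ^ ((1:ℝ)/2) ≤ Real.exp x := by
  rcases le_total x 1 with h | h
  · exact le_trans (Real.rpow_le_one hx h (by norm_num)) (Real.one_le_exp hx)
  · calc x ^ ((1:ℝ)/2) ≤ x ^ (1:ℝ) :=
        Real.rpow_le_rpow_of_exponent_le h (by norm_num)
      _ = x := Real.rpow_one x
      _ ≤ Real.exp x := by linarith [Real.add_one_le_exp x]

lemma le_mul_of_div_le {a b c : ℝ≥0∞} (hc0 : c ≠ 0) (hct : c ≠ ⊤) (h : a / b ≤ c) :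
    a ≤ c * b := by
  rcases eq_or_ne b ⊤ with rfl | hbt
  · simp [ENNReal.mul_top hc0]
  rcases eq_or_ne b 0 with rfl | hb0
  · rcases eq_or_ne a 0 with rfl | ha
    · simp
    · rw [ENNReal.div_zero ha] at h
      exact absurd (top_le_iff.1 h) hct
  · exact (ENNReal.div_le_iff hb0 hbt).1 h


lemma mixNum_eq (h : ℝ → ℝ) (s : ℝ) : mixNum h s = W (-(1:ℝ)/2) h s (Ioi 0) := rfl
lemma mixDen_eq (h : ℝ → ℝ) (s : ℝ) : mixDen h s = W ((1:ℝ)/2) h s (Ioi 0) := rfl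

set_option maxHeartbeats 1000000 in
lemma transfer (h h' : ℝ → ℝ) (hm : IsMixingDensity h) (hm' : IsMixingDensity h')
    (ε c1 c2 : ℝ) (hε : 0 < ε) (hc1 : 0 < c1)
    (hpos' : ∀ u ∈ Ioo (0:ℝ) ε, 0 < h' u)
    (hlow : ∀ u ∈ Ioo (0:ℝ) ε, c1 * h' u ≤ h u)
    (hup : ∀ u ∈ Ioo (0:ℝ) ε, h u ≤ c2 * h' u)
    {l : ℝ} (hl : MemA h' l) {δ : ℝ} (hδ : 0 < δ) :
    MemA h (c2 * (1 + δ) * l / c1) := by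
  obtain ⟨hmeas, hnn, hint⟩ := hm
  obtain ⟨hmeas', hnn', hint'⟩ := hm'
  obtain ⟨hl0, k0, hk0⟩ := hl
  set k : ℝ := max k0 1 with hkdef
  have hk1 : (1:ℝ) ≤ k := le_max_right _ _
  have hk : ∀ s : ℝ, 0 ≤ s →
      mixNum h' s ≤ ENNReal.ofReal (l * s + k) * mixDen h' s := by
    intro s hs
    have h1 : mixNum h' s / mixDen h' s ≤ ENNReal.ofReal (l * s + k) :=
      (hk0 s hs).trans (ENNReal.ofReal_le_ofReal
        (add_le_add le_rfl (le_max_left _ _)))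
    exact le_mul_of_div_le
      (ne_of_gt (ENNReal.ofReal_pos.2 (by nlinarith [mul_nonneg hl0 hs])))
      ENNReal.ofReal_ne_top h1
  have hc2 : 0 < c2 := by
    have hu : (ε/2) ∈ Ioo (0:ℝ) ε := ⟨by linarith, by linarith⟩
    have h1 := (hlow _ hu).trans (hup _ hu)
    have hp := hpos' _ hu
    nlinarith
  -- the constant A
  have hIooSub : Ioo (0:ℝ) (ε/4) ⊆ Ioi 0 := fun u hu => hu.1
  have hone4 : ∫⁻ u in Ioo (0:ℝ) (ε/4), ENNReal.ofReal (h' u) ≤ 1 := by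
    rw [← hint']; exact lintegral_mono_set hIooSub
  set A : ℝ≥0∞ := W ((1:ℝ)/2) h' 0 (Ioo 0 (ε/4)) with hAdef
  have hAtop : A ≠ ⊤ := by
    have hle : A ≤ ENNReal.ofReal ((ε/4) ^ ((1:ℝ)/2)) := by
      refine W_le_const hmeas' (Real.rpow_nonneg (by linarith) _)
        (fun u hu => hnn' u hu.1) (fun u hu => ?_) hone4
      have : u ^ ((1:ℝ)/2) ≤ (ε/4) ^ ((1:ℝ)/2) :=
        Real.rpow_le_rpow hu.1.le hu.2.le (by norm_num)
      simpa [Real.exp_zero] using this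
    exact ne_top_of_le_ne_top ENNReal.ofReal_ne_top hle
  have hApos : 0 < A := by
    rw [hAdef, W]
    rw [setLIntegral_pos_iff (by fun_prop)]
    have hsub : Ioo (0:ℝ) (ε/4) ⊆
        Function.support (fun u => ENNReal.ofReal
          (u ^ ((1:ℝ)/2) * Real.exp (-(0 * u) / 2) * h' u)) := by
      intro u hu
      have hu0 : (0:ℝ) < u := hu.1
      have hh' : 0 < h' u := hpos' u ⟨hu.1, by linarith [hu.2]⟩
      have : 0 < u ^ ((1:ℝ)/2) * Real.exp (-(0 * u) / 2) * h' u := by positivity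
      exact (ENNReal.ofReal_pos.2 this).ne'
    calc (0:ℝ≥0∞) < ENNReal.ofReal (ε/4) := ENNReal.ofReal_pos.2 (by linarith)
      _ = volume (Ioo (0:ℝ) (ε/4)) := by rw [Real.volume_Ioo, sub_zero]
      _ ≤ volume (Function.support _ ∩ Ioo (0:ℝ) (ε/4)) := by
          exact measure_mono (subset_inter hsub (subset_refl _))
  set a : ℝ := A.toReal with hadef
  have ha0 : 0 < a := ENNReal.toReal_pos hApos.ne' hAtop
  have hAr : ENNReal.ofReal a = A := ENNReal.ofReal_toReal hAtop
  -- choose s0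
  have hTend : Filter.Tendsto (fun s : ℝ => ε ^ ((1:ℝ)/2) * Real.exp (-(s * ε) / 8))
      Filter.atTop (nhds 0) := by
    have h1 : Filter.Tendsto (fun s : ℝ => -(s * ε) / 8) Filter.atTop Filter.atBot := by
      have h2 : Filter.Tendsto (fun s : ℝ => s * (-(ε/8))) Filter.atTop Filter.atBot :=
        Filter.tendsto_id.atTop_mul_const_of_neg' (by linarith)
      convert h2 using 2 with s
      ring
    have h3 := Real.tendsto_exp_atBot.comp h1
    have h4 := h3.const_mul (ε ^ ((1:ℝ)/2))
    simpa using h4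
  obtain ⟨s0, hs0⟩ := Filter.eventually_atTop.1
    ((hTend.eventually_lt_const (show (0:ℝ) < δ * a by positivity)).and
      (Filter.eventually_ge_atTop (8/ε)))
  set s1 : ℝ := max s0 0 with hs1def
  have hs1nn : (0:ℝ) ≤ s1 := le_max_right _ _
  -- numerator at 0 bound
  set Mr : ℝ≥0∞ := ENNReal.ofReal (Real.exp 1 * ((l + k) * 2)) + 1 with hMrdef
  have hMr : mixNum h' 0 ≤ Mr := by
    rw [mixNum_eq, W_split _ _ _ 1 one_pos]
    have t1 : W (-(1:ℝ)/2) h' 0 (Ici 1) ≤ ENNReal.ofReal 1 := by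
      refine W_le_const hmeas' zero_le_one
        (fun u hu => hnn' u (show (0:ℝ) < u from lt_of_lt_of_le (one_pos : (0:ℝ) < 1) hu)) (fun u hu => ?_) ?_
      · have h1 : u ^ (-(1:ℝ)/2) ≤ 1 :=
          Real.rpow_le_one_of_one_le_of_nonpos hu (by norm_num)
        simpa [Real.exp_zero] using h1
      · rw [← hint']
        exact lintegral_mono_set (fun u hu => show u ∈ Ioi (0:ℝ) from lt_of_lt_of_le (one_pos : (0:ℝ) < 1) hu)
    have t2 : W (-(1:ℝ)/2) h' 0 (Ioo 0 1) ≤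
        ENNReal.ofReal (Real.exp 1) * W (-(1:ℝ)/2) h' 1 (Ioo 0 1) := by
      unfold W
      rw [← lintegral_const_mul' _ _ ENNReal.ofReal_ne_top]
      refine setLIntegral_mono (by fun_prop) fun u hu => ?_
      have hu0 : (0:ℝ) < u := hu.1
      have hgn : 0 ≤ h' u := hnn' u hu0
      have hup2 : (0:ℝ) ≤ u ^ (-(1:ℝ)/2) := (Real.rpow_pos_of_pos hu0 _).le
      rw [← ENNReal.ofReal_mul (Real.exp_nonneg _)]
      refine ENNReal.ofReal_le_ofReal ?_
      have h1 : (1:ℝ) ≤ Real.exp 1 * Real.exp (-(1 * u) / 2) := by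
        rw [← Real.exp_add]
        refine Real.one_le_exp ?_
        nlinarith [hu.2]
      calc u ^ (-(1:ℝ)/2) * Real.exp (-(0 * u) / 2) * h' u
          = (u ^ (-(1:ℝ)/2) * h' u) * 1 := by simp [Real.exp_zero]
        _ ≤ (u ^ (-(1:ℝ)/2) * h' u) * (Real.exp 1 * Real.exp (-(1 * u) / 2)) :=
            mul_le_mul_of_nonneg_left h1 (mul_nonneg hup2 hgn)
        _ = Real.exp 1 * (u ^ (-(1:ℝ)/2) * Real.exp (-(1 * u) / 2) * h' u) := by ring
    have t3 : W (-(1:ℝ)/2) h' 1 (Ioo 0 1) ≤ mixNum h' 1 := by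
      rw [mixNum_eq]
      exact lintegral_mono_set (fun u hu => hu.1)
    have t4 : mixNum h' 1 ≤ ENNReal.ofReal (l * 1 + k) * mixDen h' 1 := hk 1 zero_le_one
    have t5 : mixDen h' 1 ≤ ENNReal.ofReal 2 := by
      rw [mixDen_eq]
      refine W_le_const hmeas' (by norm_num) hnn' (fun u hu => ?_) (le_of_eq hint')
      have hu0 : (0:ℝ) < u := hu
      have e1 : u ^ ((1:ℝ)/2) = 2 ^ ((1:ℝ)/2) * (u/2) ^ ((1:ℝ)/2) := by
        rw [← Real.mul_rpow (by norm_num) (by linarith)]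
        congr 1
        ring
      have e2 : (u/2) ^ ((1:ℝ)/2) ≤ Real.exp (u/2) := rpow_half_le_exp (by linarith)
      have e3 : (2:ℝ) ^ ((1:ℝ)/2) ≤ 2 := by
        calc (2:ℝ) ^ ((1:ℝ)/2) ≤ 2 ^ (1:ℝ) :=
          Real.rpow_le_rpow_of_exponent_le (by norm_num) (by norm_num)
        _ = 2 := Real.rpow_one 2
      have e4 : Real.exp (-(1 * u) / 2) = (Real.exp (u/2))⁻¹ := by
        rw [← Real.exp_neg]; ring_nf
      rw [e1, e4]
      have hexp : (0:ℝ) < Real.exp (u/2) := Real.exp_pos _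
      calc 2 ^ ((1:ℝ)/2) * (u/2) ^ ((1:ℝ)/2) * (Real.exp (u/2))⁻¹
          ≤ 2 * Real.exp (u/2) * (Real.exp (u/2))⁻¹ := by
            refine mul_le_mul_of_nonneg_right ?_ (by positivity)
            exact mul_le_mul e3 e2 (Real.rpow_nonneg (by linarith) _) (by norm_num)
        _ = 2 := by field_simp
    calc W (-(1:ℝ)/2) h' 0 (Ioo 0 1) + W (-(1:ℝ)/2) h' 0 (Ici 1)
        ≤ ENNReal.ofReal (Real.exp 1) * (ENNReal.ofReal (l * 1 + k) * ENNReal.ofReal 2) + ENNReal.ofReal 1 := by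
          refine add_le_add (t2.trans ?_) t1
          exact mul_le_mul_right (t3.trans (t4.trans (mul_le_mul_right t5 _))) _
      _ = Mr := by
          rw [hMrdef, ← ENNReal.ofReal_mul (by positivity : (0:ℝ) ≤ l * 1 + k),
            ← ENNReal.ofReal_mul (Real.exp_nonneg _), ENNReal.ofReal_one]
          congr 2
          ring
  have hMrtop : Mr ≠ ⊤ := by
    rw [hMrdef]
    exact ENNReal.add_ne_top.2 ⟨ENNReal.ofReal_ne_top, ENNReal.one_ne_top⟩
  -- main per-s facts
  have hIooε : Ioo (0:ℝ) ε ⊆ Ioi 0 := fun u hu => hu.1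
  have hIciε : Ici ε ⊆ Ioi (0:ℝ) := fun u hu => lt_of_lt_of_le hε hu
  have honeIci : ∫⁻ u in Ici ε, ENNReal.ofReal (h' u) ≤ 1 := by
    rw [← hint']; exact lintegral_mono_set hIciε
  have honeIcih : ∫⁻ u in Ici ε, ENNReal.ofReal (h u) ≤ 1 := by
    rw [← hint]; exact lintegral_mono_set hIciε
  have F_NIh : ∀ s : ℝ, W (-(1:ℝ)/2) h s (Ioo 0 ε) ≤
      ENNReal.ofReal c2 * W (-(1:ℝ)/2) h' s (Ioo 0 ε) :=
    fun s => W_le_mul hmeas' hc2.le hIooε hup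
  have F_NT : ∀ s : ℝ, 0 ≤ s → W (-(1:ℝ)/2) h s (Ici ε) ≤
      ENNReal.ofReal (ε ^ (-(1:ℝ)/2) * Real.exp (-(s * ε) / 8)) := by
    intro s hs
    refine W_le_const hmeas (by positivity) (fun u hu => hnn u (hIciε hu))
      (fun u hu => ?_) honeIcih
    have hu0 : (0:ℝ) < u := hIciε hu
    have h1 : u ^ (-(1:ℝ)/2) ≤ ε ^ (-(1:ℝ)/2) := by
      rw [show (-(1:ℝ)/2) = -((1:ℝ)/2) by norm_num, Real.rpow_neg hε.le,
        Real.rpow_neg hu0.le]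
      exact inv_anti₀ (Real.rpow_pos_of_pos hε _)
        (Real.rpow_le_rpow hε.le hu (by norm_num))
    have h2 : Real.exp (-(s * u) / 2) ≤ Real.exp (-(s * ε) / 8) := by
      refine Real.exp_le_exp.2 ?_
      have := mul_le_mul_of_nonneg_left (hu : ε ≤ u) hs
      nlinarith
    exact mul_le_mul h1 h2 (Real.exp_nonneg _) (Real.rpow_nonneg hε.le _)
  have F_DIlow : ∀ s : ℝ, 0 ≤ s →
      ENNReal.ofReal (Real.exp (-(s * ε) / 8)) * A ≤ W ((1:ℝ)/2) h' s (Ioo 0 ε) :=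
    fun s hs => exp_mul_le_W hs hε hmeas' hnn'
  have F_Dh : ∀ s : ℝ, ENNReal.ofReal c1 * W ((1:ℝ)/2) h' s (Ioo 0 ε) ≤ mixDen h s := by
    intro s
    rw [mixDen_eq, W_split _ _ _ _ hε]
    exact le_trans (mul_le_W hmeas hc1.le hIooε hlow) le_self_add
  have F_DT : ∀ s : ℝ, 8/ε ≤ s → W ((1:ℝ)/2) h' s (Ici ε) ≤
      ENNReal.ofReal (ε ^ ((1:ℝ)/2) * Real.exp (-(s * ε) / 8) * Real.exp (-(s * ε) / 8)) := by
    intro s hs8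
    have hs0 : (0:ℝ) < s := lt_of_lt_of_le (by positivity) hs8
    refine W_le_const hmeas' (by positivity) (fun u hu => hnn' u (hIciε hu))
      (fun u hu => ?_) honeIci
    have hu0 : (0:ℝ) < u := hIciε hu
    have key1 : u ^ ((1:ℝ)/2) = (s * u / 8) ^ ((1:ℝ)/2) * (8/s) ^ ((1:ℝ)/2) := by
      rw [← Real.mul_rpow (by positivity) (by positivity)]
      congr 1
      field_simp
    have key2 : (s * u / 8) ^ ((1:ℝ)/2) ≤ Real.exp (s * u / 8) :=
      rpow_half_le_exp (by positivity)
    have key3 : (8/s) ^ ((1:ℝ)/2) ≤ ε ^ ((1:ℝ)/2) := by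
      refine Real.rpow_le_rpow (by positivity) ?_ (by norm_num)
      rw [div_le_iff₀ hs0]
      have h8 : (8/ε) * ε = 8 := div_mul_cancel₀ _ hε.ne'
      have h9 := mul_le_mul_of_nonneg_right hs8 hε.le
      linarith
    have hseps : s * ε ≤ s * u := mul_le_mul_of_nonneg_left hu hs0.le
    calc u ^ ((1:ℝ)/2) * Real.exp (-(s * u) / 2)
        = (s * u / 8) ^ ((1:ℝ)/2) * ((8/s) ^ ((1:ℝ)/2) * Real.exp (-(s * u) / 2)) := by
          rw [key1]; ring
      _ ≤ Real.exp (s * u / 8) * ((8/s) ^ ((1:ℝ)/2) * Real.exp (-(s * u) / 2)) := by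
          refine mul_le_mul_of_nonneg_right key2 ?_
          positivity
      _ ≤ Real.exp (s * u / 8) * (ε ^ ((1:ℝ)/2) * Real.exp (-(s * u) / 2)) := by
          refine mul_le_mul_of_nonneg_left ?_ (Real.exp_nonneg _)
          exact mul_le_mul_of_nonneg_right key3 (Real.exp_nonneg _)
      _ = ε ^ ((1:ℝ)/2) * Real.exp (s * u / 8 + -(s * u) / 2) := by
          rw [Real.exp_add]; ring
      _ ≤ ε ^ ((1:ℝ)/2) * Real.exp (-(s * ε) / 8 + -(s * ε) / 8) := by
          refine mul_le_mul_of_nonneg_left (Real.exp_le_exp.2 (by nlinarith))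
            (Real.rpow_nonneg hε.le _)
      _ = ε ^ ((1:ℝ)/2) * Real.exp (-(s * ε) / 8) * Real.exp (-(s * ε) / 8) := by
          rw [Real.exp_add]; ring
  have F_NI' : ∀ s : ℝ, 0 ≤ s → W (-(1:ℝ)/2) h' s (Ioo 0 ε) ≤ Mr := by
    intro s hs
    calc W (-(1:ℝ)/2) h' s (Ioo 0 ε) ≤ W (-(1:ℝ)/2) h' 0 (Ioo 0 ε) :=
        W_mono_s hs hmeas' hnn' hIooε
      _ ≤ W (-(1:ℝ)/2) h' 0 (Ioi 0) := lintegral_mono_set hIooε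
      _ = mixNum h' 0 := (mixNum_eq h' 0).symm
      _ ≤ Mr := hMr
  -- constants
  set l' : ℝ := c2 * (1 + δ) * l / c1 with hl'def
  have hl'0 : 0 ≤ l' := div_nonneg (mul_nonneg (mul_nonneg hc2.le (by linarith)) hl0) hc1.le
  set k1 : ℝ := (c2 * (1 + δ) * k + ε ^ (-(1:ℝ)/2) / a) / c1 with hk1def
  have hk10 : 0 ≤ k1 := by positivity
  set B : ℝ≥0∞ := ENNReal.ofReal c2 * Mr + ENNReal.ofReal (ε ^ (-(1:ℝ)/2)) with hBdef
  have hBtop : B ≠ ⊤ := by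
    rw [hBdef]
    exact ENNReal.add_ne_top.2
      ⟨ENNReal.mul_ne_top ENNReal.ofReal_ne_top hMrtop, ENNReal.ofReal_ne_top⟩
  set D0r : ℝ := c1 * Real.exp (-(s1 * ε) / 8) * a with hD0def
  have hD0 : 0 < D0r := by positivity
  set K2 : ℝ := B.toReal / D0r with hK2def
  have hK20 : 0 ≤ K2 := div_nonneg ENNReal.toReal_nonneg hD0.le
  set k' : ℝ := k1 + K2 with hk'def
  refine ⟨hl'0, k', fun s hs => ?_⟩
  apply ENNReal.div_le_of_le_mul
  rcases le_total s s1 with hcase | hcase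
  · -- small s
    have hnum : mixNum h s ≤ B := by
      rw [mixNum_eq, W_split _ _ _ _ hε, hBdef]
      refine add_le_add ((F_NIh s).trans (mul_le_mul_right (F_NI' s hs) _))
        ((F_NT s hs).trans (ENNReal.ofReal_le_ofReal ?_))
      have : Real.exp (-(s * ε) / 8) ≤ 1 := by
        rw [Real.exp_le_one_iff]
        nlinarith [mul_nonneg hs hε.le]
      nlinarith [Real.rpow_nonneg hε.le (-(1:ℝ)/2), Real.exp_nonneg (-(s * ε) / 8)]
    have hden : ENNReal.ofReal D0r ≤ mixDen h s := by
      have e1 : Real.exp (-(s1 * ε) / 8) ≤ Real.exp (-(s * ε) / 8) := by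
        refine Real.exp_le_exp.2 ?_
        have := mul_le_mul_of_nonneg_right hcase hε.le
        linarith
      calc ENNReal.ofReal D0r
          = ENNReal.ofReal c1 * (ENNReal.ofReal (Real.exp (-(s1 * ε) / 8)) * A) := by
            rw [hD0def, ENNReal.ofReal_mul (by positivity), ENNReal.ofReal_mul hc1.le,
              hAr, mul_assoc]
        _ ≤ ENNReal.ofReal c1 * (ENNReal.ofReal (Real.exp (-(s * ε) / 8)) * A) := by
            exact mul_le_mul_right (mul_le_mul_left (ENNReal.ofReal_le_ofReal e1) _) _
        _ ≤ ENNReal.ofReal c1 * W ((1:ℝ)/2) h' s (Ioo 0 ε) :=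
            mul_le_mul_right (F_DIlow s hs) _
        _ ≤ mixDen h s := F_Dh s
    calc mixNum h s ≤ B := hnum
      _ = ENNReal.ofReal (K2 * D0r) := by
          rw [hK2def, div_mul_cancel₀ _ hD0.ne', ENNReal.ofReal_toReal hBtop]
      _ = ENNReal.ofReal K2 * ENNReal.ofReal D0r := ENNReal.ofReal_mul hK20
      _ ≤ ENNReal.ofReal (l' * s + k') * mixDen h s := by
          refine mul_le_mul' (ENNReal.ofReal_le_ofReal ?_) hden
          have : 0 ≤ l' * s := mul_nonneg hl'0 hs
          rw [hk'def]; linarith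
  · -- large s
    obtain ⟨hPa, hPb⟩ := hs0 s (le_trans (le_max_left _ _) hcase)
    have hlsk : (0:ℝ) ≤ l * s + k := by nlinarith [mul_nonneg hl0 hs]
    have han : a ≠ 0 := ha0.ne'
    -- hPa : ε^(1/2) * exp(-(s*ε)/8) < δ * a ; hPb : 8/ε ≤ s
    have n4 : mixDen h' s ≤ ENNReal.ofReal (1 + δ) * W ((1:ℝ)/2) h' s (Ioo 0 ε) := by
      rw [mixDen_eq, W_split _ _ _ _ hε]
      have hDT : W ((1:ℝ)/2) h' s (Ici ε) ≤
          ENNReal.ofReal δ * W ((1:ℝ)/2) h' s (Ioo 0 ε) := by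
        calc W ((1:ℝ)/2) h' s (Ici ε)
            ≤ ENNReal.ofReal (ε ^ ((1:ℝ)/2) * Real.exp (-(s * ε) / 8) *
                Real.exp (-(s * ε) / 8)) := F_DT s hPb
          _ ≤ ENNReal.ofReal (δ * a * Real.exp (-(s * ε) / 8)) := by
              refine ENNReal.ofReal_le_ofReal ?_
              exact mul_le_mul_of_nonneg_right hPa.le (Real.exp_nonneg _)
          _ = ENNReal.ofReal δ * (ENNReal.ofReal (Real.exp (-(s * ε) / 8)) * A) := by
              rw [← hAr, ← ENNReal.ofReal_mul (Real.exp_nonneg _),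
                ← ENNReal.ofReal_mul hδ.le]
              congr 1
              ring
          _ ≤ ENNReal.ofReal δ * W ((1:ℝ)/2) h' s (Ioo 0 ε) :=
              mul_le_mul_right (F_DIlow s hs) _
      calc W ((1:ℝ)/2) h' s (Ioo 0 ε) + W ((1:ℝ)/2) h' s (Ici ε)
          ≤ W ((1:ℝ)/2) h' s (Ioo 0 ε) + ENNReal.ofReal δ * W ((1:ℝ)/2) h' s (Ioo 0 ε) :=
            add_le_add le_rfl hDT
        _ = ENNReal.ofReal (1 + δ) * W ((1:ℝ)/2) h' s (Ioo 0 ε) := by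
            rw [ENNReal.ofReal_add zero_le_one hδ.le, ENNReal.ofReal_one, add_mul, one_mul]
    have n5 : W (-(1:ℝ)/2) h s (Ici ε) ≤
        ENNReal.ofReal (ε ^ (-(1:ℝ)/2) / a) * W ((1:ℝ)/2) h' s (Ioo 0 ε) := by
      calc W (-(1:ℝ)/2) h s (Ici ε)
          ≤ ENNReal.ofReal (ε ^ (-(1:ℝ)/2) * Real.exp (-(s * ε) / 8)) := F_NT s hs
        _ = ENNReal.ofReal (ε ^ (-(1:ℝ)/2) / a) *
            (ENNReal.ofReal (Real.exp (-(s * ε) / 8)) * A) := by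
            rw [← hAr, ← ENNReal.ofReal_mul (Real.exp_nonneg _),
              ← ENNReal.ofReal_mul (by positivity)]
            congr 1
            field_simp
        _ ≤ ENNReal.ofReal (ε ^ (-(1:ℝ)/2) / a) * W ((1:ℝ)/2) h' s (Ioo 0 ε) :=
            mul_le_mul_right (F_DIlow s hs) _
    have n2 : W (-(1:ℝ)/2) h s (Ioo 0 ε) ≤
        ENNReal.ofReal (c2 * ((l * s + k) * (1 + δ))) * W ((1:ℝ)/2) h' s (Ioo 0 ε) := by
      calc W (-(1:ℝ)/2) h s (Ioo 0 ε)
          ≤ ENNReal.ofReal c2 * W (-(1:ℝ)/2) h' s (Ioo 0 ε) := F_NIh s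
        _ ≤ ENNReal.ofReal c2 * mixNum h' s := by
            refine mul_le_mul_right ?_ _
            rw [mixNum_eq]
            exact lintegral_mono_set hIooε
        _ ≤ ENNReal.ofReal c2 * (ENNReal.ofReal (l * s + k) * mixDen h' s) :=
            mul_le_mul_right (hk s hs) _
        _ ≤ ENNReal.ofReal c2 * (ENNReal.ofReal (l * s + k) *
            (ENNReal.ofReal (1 + δ) * W ((1:ℝ)/2) h' s (Ioo 0 ε))) := by
            exact mul_le_mul_right (mul_le_mul_right n4 _) _
        _ = ENNReal.ofReal (c2 * ((l * s + k) * (1 + δ))) * W ((1:ℝ)/2) h' s (Ioo 0 ε) := by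
            rw [ENNReal.ofReal_mul hc2.le, ENNReal.ofReal_mul hlsk]
            ring
    have hreal : c2 * ((l * s + k) * (1 + δ)) + ε ^ (-(1:ℝ)/2) / a ≤ (l' * s + k') * c1 := by
      have hK2c1 : 0 ≤ K2 * c1 := mul_nonneg hK20 hc1.le
      have e0 : (l' * s + k') * c1 = (l' * c1) * s + k1 * c1 + K2 * c1 := by
        rw [hk'def]; ring
      have e1 : l' * c1 = c2 * (1 + δ) * l := div_mul_cancel₀ _ hc1.ne'
      have e2 : k1 * c1 = c2 * (1 + δ) * k + ε ^ (-(1:ℝ)/2) / a :=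
        div_mul_cancel₀ _ hc1.ne'
      rw [e0, e1, e2]
      nlinarith [hK2c1]
    calc mixNum h s = W (-(1:ℝ)/2) h s (Ioo 0 ε) + W (-(1:ℝ)/2) h s (Ici ε) := by
          rw [mixNum_eq]; exact W_split _ _ _ _ hε
      _ ≤ ENNReal.ofReal (c2 * ((l * s + k) * (1 + δ))) * W ((1:ℝ)/2) h' s (Ioo 0 ε) +
          ENNReal.ofReal (ε ^ (-(1:ℝ)/2) / a) * W ((1:ℝ)/2) h' s (Ioo 0 ε) :=
          add_le_add n2 n5
      _ = ENNReal.ofReal (c2 * ((l * s + k) * (1 + δ)) + ε ^ (-(1:ℝ)/2) / a) *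
          W ((1:ℝ)/2) h' s (Ioo 0 ε) := by
          rw [ENNReal.ofReal_add
            (mul_nonneg hc2.le (mul_nonneg hlsk (by linarith))) (by positivity)]
          ring
      _ ≤ ENNReal.ofReal ((l' * s + k') * c1) * W ((1:ℝ)/2) h' s (Ioo 0 ε) :=
          mul_le_mul_left (ENNReal.ofReal_le_ofReal hreal) _
      _ = ENNReal.ofReal (l' * s + k') * (ENNReal.ofReal c1 * W ((1:ℝ)/2) h' s (Ioo 0 ε)) := by
          rw [ENNReal.ofReal_mul (by positivity : (0:ℝ) ≤ l' * s + k')]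
          ring
      _ ≤ ENNReal.ofReal (l' * s + k') * mixDen h s := mul_le_mul_right (F_Dh s) _

lemma lambdaH_le (h h' : ℝ → ℝ)
    (hmix : IsMixingDensity h) (hmix' : IsMixingDensity h')
    (hpos' : ∃ ε > 0, ∀ u ∈ Ioo (0:ℝ) ε, 0 < h' u)
    (hlim : ∃ L : ℝ, 0 < L ∧
      Filter.Tendsto (fun u => h u / h' u) (nhdsWithin 0 (Ioi (0:ℝ))) (nhds L)) :
    lambdaH h ≤ lambdaH h' := by
  obtain ⟨L, hL, hT⟩ := hlim
  obtain ⟨ε1, hε1, hp'⟩ := hpos'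
  refine le_sInf ?_
  rintro x ⟨l, hlmem, rfl⟩
  have hl0 : 0 ≤ l := hlmem.1
  refine ENNReal.le_of_forall_pos_le_add fun η hη _ => ?_
  have hη' : (0:ℝ) < η := hη
  set δ : ℝ := min (1/2) (η / (8*l+8)) with hδdef
  have hδ0 : 0 < δ := lt_min (by norm_num) (by positivity)
  have hδhalf : δ ≤ 1/2 := min_le_left _ _
  have hδη : δ ≤ η / (8*l+8) := min_le_right _ _
  have hmemIoo : Ioo ((1-δ)*L) ((1+δ)*L) ∈ nhds L :=
    Ioo_mem_nhds (by nlinarith) (by nlinarith)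
  have hev : (fun u => h u / h' u) ⁻¹' (Ioo ((1-δ)*L) ((1+δ)*L)) ∈
      nhdsWithin 0 (Ioi (0:ℝ)) := hT hmemIoo
  rw [Metric.mem_nhdsWithin_iff] at hev
  obtain ⟨ε2, hε2, hsub⟩ := hev
  set ε : ℝ := min ε1 ε2 with hεdef
  have hε : 0 < ε := lt_min hε1 hε2
  have hposε : ∀ u ∈ Ioo (0:ℝ) ε, 0 < h' u :=
    fun u hu => hp' u ⟨hu.1, lt_of_lt_of_le hu.2 (min_le_left _ _)⟩
  have hcl : ∀ u ∈ Ioo (0:ℝ) ε,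
      (1-δ)*L * h' u ≤ h u ∧ h u ≤ (1+δ)*L * h' u := by
    intro u hu
    have hu2 : u ∈ Metric.ball (0:ℝ) ε2 ∩ Ioi 0 := by
      constructor
      · rw [Metric.mem_ball, Real.dist_eq, sub_zero, abs_of_pos hu.1]
        exact lt_of_lt_of_le hu.2 (min_le_right _ _)
      · exact hu.1
    have hr := hsub hu2
    have hh' : 0 < h' u := hposε u hu
    constructor
    · have := hr.1
      rw [lt_div_iff₀ hh'] at this
      exact this.le
    · have := hr.2
      rw [div_lt_iff₀ hh'] at this
      exact this.le
  have htr := transfer h h' hmix hmix' ε ((1-δ)*L) ((1+δ)*L) hε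
    (by nlinarith) hposε (fun u hu => (hcl u hu).1) (fun u hu => (hcl u hu).2)
    hlmem hδ0
  have hval : (1+δ)*L * (1+δ) * l / ((1-δ)*L) ≤ l + η := by
    rw [div_le_iff₀ (by nlinarith : (0:ℝ) < (1-δ)*L)]
    have h1 : (8*l+8) * δ ≤ η := by
      have h2 : δ * (8*l+8) ≤ (η / (8*l+8)) * (8*l+8) :=
        mul_le_mul_of_nonneg_right hδη (by positivity)
      rw [div_mul_cancel₀ _ (by positivity : (8*l+8) ≠ (0:ℝ))] at h2
      linarith
    have key : (1+δ)*(1+δ)*l ≤ (l+η)*(1-δ) := by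
      nlinarith [h1, mul_le_mul_of_nonneg_right hδhalf (mul_nonneg hδ0.le hl0),
        mul_le_mul_of_nonneg_right hδhalf hη'.le, mul_nonneg hδ0.le hl0]
    have hmul := mul_le_mul_of_nonneg_right key hL.le
    calc (1+δ)*L*(1+δ)*l = ((1+δ)*(1+δ)*l)*L := by ring
      _ ≤ ((l+η)*(1-δ))*L := hmul
      _ = (l+η)*((1-δ)*L) := by ring
  calc lambdaH h ≤ ENNReal.ofReal ((1+δ)*L * (1+δ) * l / ((1-δ)*L)) :=
        sInf_le ⟨_, htr, rfl⟩
    _ ≤ ENNReal.ofReal (l + η) := ENNReal.ofReal_le_ofReal hval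
    _ ≤ ENNReal.ofReal l + ENNReal.ofReal (η:ℝ) := ENNReal.ofReal_add_le
    _ = ENNReal.ofReal l + η := by rw [ENNReal.ofReal_coe_nnreal]

end LambdaHAux

/-- If two mixing densities `h`, `h̃` are strictly positive in a neighborhood of zero and
`h(u)/h̃(u)` converges, as `u → 0+`, to a limit in `(0,∞)`, then `λ_h = λ_h̃`. -/
theorem lambdaH_eq_of_tendsto_ratio (h h' : ℝ → ℝ)
    (hmix : IsMixingDensity h) (hmix' : IsMixingDensity h')
    (hpos : ∃ ε > 0, ∀ u ∈ Ioo (0:ℝ) ε, 0 < h u)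
    (hpos' : ∃ ε > 0, ∀ u ∈ Ioo (0:ℝ) ε, 0 < h' u)
    (hlim : ∃ L : ℝ, 0 < L ∧
      Filter.Tendsto (fun u => h u / h' u) (nhdsWithin 0 (Ioi (0:ℝ))) (nhds L)) :
    lambdaH h = lambdaH h' := by
  obtain ⟨L, hL, hT⟩ := hlim
  refine le_antisymm
    (LambdaHAux.lambdaH_le h h' hmix hmix' hpos' ⟨L, hL, hT⟩)
    (LambdaHAux.lambdaH_le h' h hmix' hmix hpos ⟨L⁻¹, inv_pos.2 hL, ?_⟩)
  exact (hT.inv₀ hL.ne').congr fun u => inv_div (h u) (h' u)
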